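/- Let G be a graph, let M be a maximal matching of G, let M' ⊆ M be any subset of M, let V' := V(M') and U := V ∖ V(M), and let H := G[V', U]. Then for every matching S of H, μ(G) ≥ |M| + |S| − |M'|. Consequently, μ(G) ≥ |M| + max{0, μ(H) − |M'|}. -/

import Mathlib

open scoped Classical

noncomputable section

variable {V : Type*}

/-- `M` is a matching of `G`: a set of edges of `G` that are pairwise vertex-disjoint. -/
def IsMatchingSet (G : SimpleGraph V) (M : Set (Sym2 V)) : Prop :=
  M ⊆ G.edgeSet ∧ M.Pairwise fun e f => ∀ v : V, v ∈ e → v ∉ f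

/-- The set of vertices matched by the edge set `M`. -/
def mVerts (M : Set (Sym2 V)) : Set V := {v | ∃ e ∈ M, v ∈ e}

/-- The matching number of `G`. -/
def nu (G : SimpleGraph V) : ℕ :=
  sSup {n | ∃ M : Set (Sym2 V), IsMatchingSet G M ∧ M.ncard = n}

/-- The bipartite subgraph of `G` consisting of the edges of `G` with one endpoint in `X`
and the other endpoint in `Y`. -/
def between (G : SimpleGraph V) (X Y : Set V) : SimpleGraph V where
  Adj u v := G.Adj u v ∧ ((u ∈ X ∧ v ∈ Y) ∨ (u ∈ Y ∧ v ∈ X))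
  symm := ⟨fun u v h => ⟨h.1.symm, h.2.elim (fun hh => Or.inr ⟨hh.2, hh.1⟩) (fun hh => Or.inl ⟨hh.2, hh.1⟩)⟩⟩
  loopless := ⟨fun v h => G.loopless.1 v h.1⟩

/-- The induced subgraph of `G` on the vertex set `U` (on the same vertex type). -/
def inducedOn (G : SimpleGraph V) (U : Set V) : SimpleGraph V where
  Adj u v := G.Adj u v ∧ u ∈ U ∧ v ∈ U
  symm := ⟨fun u v h => ⟨h.1.symm, h.2.2, h.2.1⟩⟩
  loopless := ⟨fun v h => G.loopless.1 v h.1⟩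

/-- The degree of `v` in `H`. -/
def deg (H : SimpleGraph V) (v : V) : ℕ := (H.neighborSet v).ncard

/-- `H` is a `(β, βm)`-EDCS of `G`. -/
def IsEDCS (G H : SimpleGraph V) (β βm : ℝ) : Prop :=
  H ≤ G ∧ (∀ u v, H.Adj u v → (deg H u + deg H v : ℝ) ≤ β) ∧
    (∀ u v, G.Adj u v → ¬ H.Adj u v → βm ≤ (deg H u + deg H v : ℝ))

/-- The neighborhood of a set `A` in `H`. -/
def nbhd (H : SimpleGraph V) (A : Set V) : Set V := {v | ∃ a ∈ A, H.Adj a v}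

/-- The edges of `M` with one endpoint in `X` and the other endpoint in `Y`. -/
def crossE (M : Set (Sym2 V)) (X Y : Set V) : Set (Sym2 V) :=
  {e | e ∈ M ∧ ∃ u v, e = s(u, v) ∧ u ∈ X ∧ v ∈ Y}

/-- `M` is a maximal matching of `G`. -/
def IsMaximalMatching (G : SimpleGraph V) (M : Set (Sym2 V)) : Prop :=
  IsMatchingSet G M ∧ ∀ M' : Set (Sym2 V), IsMatchingSet G M' → M ⊆ M' → M' = M

/-- If `M` is a maximal matching of `G`, `M' ⊆ M`, `V' = V(M')`, `U = V ∖ V(M)` and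
`H = G[V', U]`, then every matching `S` of `H` satisfies `μ(G) ≥ |M| + |S| − |M'|`;
consequently `μ(G) ≥ |M| + max{0, μ(H) − |M'|}`. -/
theorem no_overestimate_via_three_aug_paths [Fintype V] (G : SimpleGraph V)
    (M M' : Set (Sym2 V)) (hM : IsMaximalMatching G M) (hM'M : M' ⊆ M)
    (V' U : Set V) (hV' : V' = mVerts M') (hU : U = Set.univ \ mVerts M)
    (H : SimpleGraph V) (hH : H = between G V' U) :
    (∀ S : Set (Sym2 V), IsMatchingSet H S →
        (M.ncard : ℤ) + (S.ncard : ℤ) - (M'.ncard : ℤ) ≤ (nu G : ℤ)) ∧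
      (M.ncard : ℤ) + max 0 ((nu H : ℤ) - (M'.ncard : ℤ)) ≤ (nu G : ℤ) := by
  classical
  -- Boundedness of the matching-number defining sets
  have hbdd : ∀ (G' : SimpleGraph V),
      BddAbove {n | ∃ N : Set (Sym2 V), IsMatchingSet G' N ∧ N.ncard = n} := by
    intro G'
    refine ⟨(Set.univ : Set (Sym2 V)).ncard, ?_⟩
    rintro n ⟨N, _, rfl⟩
    exact Set.ncard_le_ncard (Set.subset_univ _) Set.finite_univ
  have hle_nu : ∀ (G' : SimpleGraph V) (N : Set (Sym2 V)), IsMatchingSet G' N →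
      N.ncard ≤ nu G' := fun G' N hN => le_csSup (hbdd G') ⟨N, hN, rfl⟩
  -- structure of edges of a matching of H
  have hSedge : ∀ S : Set (Sym2 V), IsMatchingSet H S → ∀ e ∈ S,
      ∃ u v, e = s(u, v) ∧ u ∈ V' ∧ v ∈ U := by
    intro S hS e he
    induction e using Sym2.ind with
    | _ u v =>
      have hadj : H.Adj u v := hS.1 he
      rw [hH] at hadj
      rcases hadj.2 with ⟨hu, hv⟩ | ⟨hu, hv⟩
      · exact ⟨u, v, rfl, hu, hv⟩
      · exact ⟨v, u, Sym2.eq_swap, hv, hu⟩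
  -- vertices on edges of M \ M'
  have hMvert : ∀ e ∈ M \ M', ∀ v : V, v ∈ e → v ∈ mVerts M ∧ v ∉ mVerts M' := by
    rintro e ⟨heM, heM'⟩ v hv
    refine ⟨⟨e, heM, hv⟩, ?_⟩
    rintro ⟨e', he', hve'⟩
    have hne : e ≠ e' := fun h => heM' (h ▸ he')
    exact hM.1.2 heM (hM'M he') hne v hv hve'
  -- vertices on edges of S
  have hSvert : ∀ S : Set (Sym2 V), IsMatchingSet H S → ∀ e ∈ S, ∀ v : V, v ∈ e →
      v ∈ mVerts M' ∨ v ∉ mVerts M := by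
    intro S hS e he v hv
    obtain ⟨u, w, rfl, hu, hw⟩ := hSedge S hS e he
    rcases Sym2.mem_iff.mp hv with rfl | rfl
    · exact Or.inl (hV' ▸ hu)
    · right
      rw [hU] at hw
      exact hw.2
  -- main part
  have main : ∀ S : Set (Sym2 V), IsMatchingSet H S →
      (M.ncard : ℤ) + (S.ncard : ℤ) - (M'.ncard : ℤ) ≤ (nu G : ℤ) := by
    intro S hS
    set N : Set (Sym2 V) := (M \ M') ∪ S with hN
    have hNG : IsMatchingSet G N := by
      constructor
      · rintro e (he | he)
        · exact hM.1.1 he.1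
        · obtain ⟨u, w, rfl, hu, hw⟩ := hSedge S hS e he
          have : H.Adj u w := hS.1 he
          rw [hH] at this
          exact this.1
      · rintro e (he | he) f (hf | hf) hne v hve hvf
        · exact hM.1.2 he.1 hf.1 hne v hve hvf
        · rcases hSvert S hS f hf v hvf with h | h
          · exact (hMvert e he v hve).2 h
          · exact h (hMvert e he v hve).1
        · rcases hSvert S hS e he v hve with h | h
          · exact (hMvert f hf v hvf).2 h
          · exact h (hMvert f hf v hvf).1
        · exact hS.2 he hf hne v hve hvf
    have hdisj : Disjoint (M \ M') S := by
      rw [Set.disjoint_left]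
      rintro e ⟨heM, _⟩ heS
      obtain ⟨u, w, rfl, hu, hw⟩ := hSedge S hS _ heS
      rw [hU] at hw
      exact hw.2 ⟨_, heM, Sym2.mem_mk_right u w⟩
    have hcard : N.ncard = (M \ M').ncard + S.ncard :=
      Set.ncard_union_eq hdisj (Set.toFinite _) (Set.toFinite _)
    have hdiff : (M \ M').ncard = M.ncard - M'.ncard := Set.ncard_diff hM'M (Set.toFinite _)
    have hle : M'.ncard ≤ M.ncard := Set.ncard_le_ncard hM'M (Set.toFinite _)
    have hnu := hle_nu G N hNG
    have : (N.ncard : ℤ) = (M.ncard : ℤ) - (M'.ncard : ℤ) + (S.ncard : ℤ) := by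
      rw [hcard, hdiff]
      push_cast [Nat.cast_sub hle]
      ring
    have hnu' : (N.ncard : ℤ) ≤ (nu G : ℤ) := by exact_mod_cast hnu
    linarith
  refine ⟨main, ?_⟩
  -- the matching number of H is attained
  have hnon : ({n | ∃ S : Set (Sym2 V), IsMatchingSet H S ∧ S.ncard = n}).Nonempty :=
    ⟨0, ∅, ⟨Set.empty_subset _, Set.pairwise_empty _⟩, by simp⟩
  obtain ⟨S, hS, hcS⟩ : nu H ∈ {n | ∃ S : Set (Sym2 V), IsMatchingSet H S ∧ S.ncard = n} :=
    Nat.sSup_mem hnon (hbdd H)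
  have hMnu : (M.ncard : ℤ) ≤ (nu G : ℤ) := by exact_mod_cast hle_nu G M hM.1
  rcases le_or_gt ((nu H : ℤ) - (M'.ncard : ℤ)) 0 with h | h
  · rw [max_eq_left h]
    linarith
  · rw [max_eq_right h.le]
    have := main S hS
    rw [hcS] at this
    linarith
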